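/- In the unweighted lower-bound graph Γ: for every i,j ∈ [k], if x_{ij} = 1 then d(s_i, t_j) = h + 1 and every shortest s_i–t_j path avoids v', while if x_{ij} = 0 then d(s_i, t_j) = h + 2. -/

import Mathlib

/-- Vertices of the unweighted lower-bound graph `Γ`:
`sp i j` with `j = 0,…,h` is the path from the source `s_i = sp i 0` to the
transit node `u_i = sp i h`; `tgt j` is the target `t_j`; and `vp j` with
`j = 0,…,h` is the path from `v = vp 0` to `v' = vp h`. -/
inductive LBVert (k h : ℕ) : Type
  | sp (i : Fin k) (j : Fin (h + 1))
  | tgt (i : Fin k)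
  | vp (j : Fin (h + 1))
deriving DecidableEq

/-- One-directional adjacency for `Γ`, given the bit matrix `x`. -/
def lbAdj {k h : ℕ} (x : Fin k → Fin k → Bool) : LBVert k h → LBVert k h → Prop
  | .sp i j, .sp i' j' => i = i' ∧ j'.val = j.val + 1
  | .sp i j, .tgt j' => j.val = h ∧ x i j' = true
  | .vp j, .vp j' => j'.val = j.val + 1
  | .vp j, .sp _ j' => j.val = 0 ∧ j'.val = 0
  | .vp j, .tgt _ => j.val = h
  | _, _ => False

/-- The unweighted lower-bound graph `Γ` (Definition of the paper):
edge `{u_i, t_j}` is present iff `x i j = true`. -/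
def lbGraph {k h : ℕ} (x : Fin k → Fin k → Bool) : SimpleGraph (LBVert k h) where
  Adj a b := a ≠ b ∧ (lbAdj x a b ∨ lbAdj x b a)
  symm := by
    constructor
    rintro a b ⟨hne, hor⟩
    exact ⟨hne.symm, hor.symm⟩
  loopless := by
    constructor
    rintro a ⟨hne, -⟩
    exact hne rfl

open SimpleGraph

/-- potential function -/
def lbF {k h : ℕ} (x : Fin k → Fin k → Bool) (i j : Fin k) : LBVert k h → ℕ
  | .sp i' j' => if i' = i then j'.val else j'.val + 2
  | .vp j' => j'.val + 1
  | .tgt j' => if j' = j ∧ x i j = false then h + 2 else h + 1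

lemma lbF_lip {k h : ℕ} (x : Fin k → Fin k → Bool) (i j : Fin k) {a b : LBVert k h}
    (hab : (lbGraph x).Adj a b) : lbF x i j b ≤ lbF x i j a + 1 := by
  obtain ⟨-, hor⟩ := hab
  rcases hor with hl | hl <;>
    cases a <;> cases b <;> simp only [lbAdj] at hl <;>
    simp only [lbF] <;> (try split_ifs) <;> (try omega) <;> simp_all <;> omega

lemma walk_le {V : Type*} {G : SimpleGraph V} (f : V → ℕ)
    (hf : ∀ a b, G.Adj a b → f b ≤ f a + 1) :
    ∀ {a b : V} (p : G.Walk a b), f b ≤ f a + p.length := by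
  intro a b p
  induction p with
  | nil => simp
  | cons hadj p ih =>
    have := hf _ _ hadj
    simp only [Walk.length_cons]
    omega

lemma chain_walk {V : Type*} {G : SimpleGraph V} (g : ℕ → V) :
    ∀ n : ℕ, (∀ m < n, G.Adj (g m) (g (m + 1))) →
      ∃ p : G.Walk (g 0) (g n), p.length = n := by
  intro n
  induction n with
  | zero => exact fun _ => ⟨Walk.nil, rfl⟩
  | succ n ih =>
    intro hg
    obtain ⟨p, hp⟩ := ih fun m hm => hg m (by omega)
    exact ⟨p.concat (hg n (by omega)), by simp [hp]⟩

/-- in `Γ` (with `h ≥ 1`), for every `i, j`: if `x i j = 1` then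
`d(s_i, t_j) = h + 1` and every shortest `s_i`–`t_j` path avoids `v'`, while if
`x i j = 0` then `d(s_i, t_j) = h + 2`. -/
theorem lbGraph_dist {k h : ℕ} (hh : 1 ≤ h) (x : Fin k → Fin k → Bool) (i j : Fin k) :
    (x i j = true →
      (lbGraph x).dist (LBVert.sp (h := h) i ⟨0, by omega⟩) (LBVert.tgt j) = h + 1 ∧
      ∀ p : (lbGraph x).Walk (LBVert.sp (h := h) i ⟨0, by omega⟩) (LBVert.tgt j),
        p.length = h + 1 → LBVert.vp (⟨h, by omega⟩ : Fin (h + 1)) ∉ p.support) ∧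
    (x i j = false →
      (lbGraph x).dist (LBVert.sp (h := h) i ⟨0, by omega⟩) (LBVert.tgt j) = h + 2) := by
  have hlip : ∀ a b : LBVert k h, (lbGraph x).Adj a b → lbF x i j b ≤ lbF x i j a + 1 :=
    fun a b hab => lbF_lip x i j hab
  set s : LBVert k h := LBVert.sp i ⟨0, by omega⟩ with hs
  set t : LBVert k h := LBVert.tgt j with ht
  set v' : LBVert k h := LBVert.vp ⟨h, by omega⟩ with hv'
  have hfs : lbF x i j s = 0 := by simp [lbF, hs]
  have hfv' : lbF x i j v' = h + 1 := by simp [lbF, hv']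
  constructor
  · intro hx
    have hft : lbF x i j t = h + 1 := by simp [lbF, ht, hx]
    -- lower bound for any walk s → t
    have hlower : ∀ p : (lbGraph x).Walk s t, h + 1 ≤ p.length := by
      intro p
      have := walk_le (lbF x i j) hlip p
      omega
    -- upper bound: explicit walk
    set g : ℕ → LBVert k h := fun m =>
      if hm : m ≤ h then LBVert.sp i ⟨m, by omega⟩ else LBVert.tgt j with hg
    have hg0 : g 0 = s := by simp [hg, hs]
    have hgend : g (h + 1) = t := by simp [hg, ht]
    obtain ⟨p₀, hp₀⟩ := chain_walk (G := lbGraph x) g (h + 1) (by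
      intro m hm
      rcases Nat.lt_or_ge m h with hmh | hmh
      · have h1 : g m = LBVert.sp i ⟨m, by omega⟩ := by
          simp only [hg]; rw [dif_pos (by omega)]
        have h2 : g (m + 1) = LBVert.sp i ⟨m + 1, by omega⟩ := by
          simp only [hg]; rw [dif_pos (by omega)]
        rw [h1, h2]
        refine ⟨fun hc => ?_, Or.inl ⟨rfl, rfl⟩⟩
        injection hc with _ hc'
        have := congrArg Fin.val hc'
        simp at this
      · have hmeq : m = h := by omega
        subst hmeq
        have h1 : g m = LBVert.sp i ⟨m, by omega⟩ := by
          simp only [hg]; rw [dif_pos (by omega)]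
        have h2 : g (m + 1) = LBVert.tgt j := by
          simp only [hg]; rw [dif_neg (by omega)]
        rw [h1, h2]
        exact ⟨fun hc => by injection hc, Or.inl ⟨rfl, hx⟩⟩)
    let p := p₀.copy hg0 hgend
    have hp : p.length = h + 1 := by simp only [p, Walk.length_copy]; exact hp₀
    have hd : (lbGraph x).dist s t = h + 1 := by
      have h1 := SimpleGraph.dist_le p
      have hr : (lbGraph x).Reachable s t := ⟨p⟩
      obtain ⟨q, hq⟩ := hr.exists_walk_length_eq_dist
      have := hlower q
      omega
    refine ⟨hd, ?_⟩
    intro p hplen hmem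
    obtain ⟨q, r, hqr⟩ := Walk.mem_support_iff_exists_append.mp hmem
    have hq : h + 1 ≤ q.length := by
      have := walk_le (lbF x i j) hlip q
      omega
    have hr : 1 ≤ r.length := by
      have : ¬ r.Nil := Walk.not_nil_of_ne (by simp [hv', ht])
      have := Walk.not_nil_iff_lt_length.mp this
      omega
    have := congrArg Walk.length hqr
    rw [Walk.length_append] at this
    omega
  · intro hx
    have hft : lbF x i j t = h + 2 := by simp [lbF, ht, hx]
    have hlower : ∀ p : (lbGraph x).Walk s t, h + 2 ≤ p.length := by
      intro p
      have := walk_le (lbF x i j) hlip p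
      omega
    set g : ℕ → LBVert k h := fun m =>
      if m = 0 then s else if hm : m ≤ h + 1 then LBVert.vp ⟨m - 1, by omega⟩ else LBVert.tgt j
      with hg
    have hg0 : g 0 = s := by simp [hg]
    have hgend : g (h + 2) = t := by simp [hg, ht]
    obtain ⟨p₀, hp₀⟩ := chain_walk (G := lbGraph x) g (h + 2) (by
      intro m hm
      by_cases hm0 : m = 0
      · subst hm0
        have h2 : g 1 = LBVert.vp ⟨0, by omega⟩ := by
          simp only [hg]; rw [if_neg (by omega), dif_pos (by omega)]
        rw [hg0, h2, hs]
        exact ⟨fun hc => by injection hc, Or.inr ⟨rfl, rfl⟩⟩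
      · have h1 : g m = LBVert.vp ⟨m - 1, by omega⟩ := by
          simp only [hg]; rw [if_neg hm0, dif_pos (by omega)]
        by_cases hmh : m + 1 ≤ h + 1
        · have h2 : g (m + 1) = LBVert.vp ⟨m, by omega⟩ := by
            simp only [hg]; rw [if_neg (by omega), dif_pos hmh]
            congr 1
          rw [h1, h2]
          refine ⟨fun hc => ?_, Or.inl ?_⟩
          · injection hc with hc'
            have := congrArg Fin.val hc'
            simp at this
            omega
          · show (⟨m, by omega⟩ : Fin (h+1)).val = (⟨m - 1, by omega⟩ : Fin (h+1)).val + 1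
            simp; omega
        · have hmeq : m = h + 1 := by omega
          have h2 : g (m + 1) = LBVert.tgt j := by
            simp only [hg]; rw [if_neg (by omega), dif_neg (by omega)]
          rw [h1, h2]
          refine ⟨fun hc => by injection hc, Or.inl ?_⟩
          show (⟨m - 1, by omega⟩ : Fin (h+1)).val = h
          simp; omega)
    let p := p₀.copy hg0 hgend
    have hp : p.length = h + 2 := by simp only [p, Walk.length_copy]; exact hp₀
    have h1 := SimpleGraph.dist_le p
    have hr : (lbGraph x).Reachable s t := ⟨p⟩
    obtain ⟨q, hq⟩ := hr.exists_walk_length_eq_dist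
    have := hlower q
    omega
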